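/- The Newton-type recursion for the N=2 barred homogeneous functions holds: (n+1)·h̄ₙ = Σ_{r=0}^{n} (pᵣ·h̄_{n-r} + (r+1)·p̄ᵣ·h_{n-r}), as an identity in the ring of symmetric superfunctions, where h and p generating functions are related by H·P = (t∂ₜ + τ̲∂_{τ̲} + τ̄∂_{τ̄})H. -/

import Mathlib

open MvPolynomial

variable {N : ℕ} {R : Type*}

/-- The complete homogeneous symmetric polynomial `hₙ = Σ_{i₁≤...≤iₙ} x_{i₁}···x_{iₙ}`. -/
noncomputable def hPoly (N n : ℕ) : MvPolynomial (Fin N) ℤ :=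
  ∑ m ∈ (Finset.univ : Finset (Fin N)).sym n, ((m : Multiset (Fin N)).map MvPolynomial.X).prod

/-- The power sum `pₙ = Σᵢ xᵢⁿ`, with the convention `p₀ = 0`. -/
noncomputable def pPoly (N : ℕ) : ℕ → MvPolynomial (Fin N) ℤ
  | 0 => 0
  | n + 1 => ∑ i, MvPolynomial.X i ^ (n + 1)

section
variable [Ring R] [Algebra (MvPolynomial (Fin N) ℤ) R]

/-- `h̄ₙ = ⟪d̄ h_{n+1}⟫ = Σᵢ φᵢ ∂ᵢ h_{n+1}`. -/
noncomputable def hBar (φ : Fin N → R) (n : ℕ) : R :=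
  ∑ i, φ i * algebraMap (MvPolynomial (Fin N) ℤ) R (MvPolynomial.pderiv i (hPoly N (n + 1)))

/-- `p̄ₙ = Σᵢ φᵢ xᵢⁿ`. -/
noncomputable def pBar' (φ : Fin N → R) (n : ℕ) : R :=
  ∑ i, φ i * algebraMap (MvPolynomial (Fin N) ℤ) R (MvPolynomial.X i ^ n)

end

open Finset in
lemma card_eq_sum_count {N : ℕ} (m : Multiset (Fin N)) :
    ∑ i, m.count i = Multiset.card m := by
  induction m using Multiset.induction with
  | empty => simp
  | cons a s ih =>
    simp [Multiset.count_cons, Finset.sum_add_distrib, ih, add_comm]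

lemma newton_h (N n : ℕ) :
    (n + 1) • hPoly N (n + 1) =
      ∑ r ∈ Finset.range (n + 1), (∑ i, (X i : MvPolynomial (Fin N) ℤ) ^ (r + 1)) * hPoly N (n - r) := by
  classical
  have lhs_eq : (n + 1) • hPoly N (n + 1) =
      ∑ x ∈ ((Finset.univ : Finset (Fin N)).sym (n+1)).sigma
          (fun m => (Finset.univ : Finset (Fin N)).sigma
            (fun i => Finset.range ((m : Multiset (Fin N)).count i))),
        ((x.1 : Multiset (Fin N)).map MvPolynomial.X).prod := by
    rw [Finset.sum_sigma]
    rw [hPoly, Finset.smul_sum]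
    refine Finset.sum_congr rfl fun m _ => ?_
    rw [Finset.sum_sigma]
    simp only [Finset.sum_const, Finset.card_range, ← Finset.sum_smul, card_eq_sum_count]
    have h2 : Multiset.card (m : Multiset (Fin N)) = n + 1 := m.2
    rw [h2]
  have rhs_eq : ∑ r ∈ Finset.range (n + 1),
        (∑ i, (X i : MvPolynomial (Fin N) ℤ) ^ (r + 1)) * hPoly N (n - r)
      = ∑ y ∈ (Finset.range (n + 1)).sigma
          (fun r => (Finset.univ : Finset (Fin N)).sigma
            (fun _ => (Finset.univ : Finset (Fin N)).sym (n - r))),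
          (X y.2.1 : MvPolynomial (Fin N) ℤ) ^ (y.1 + 1) * ((y.2.2 : Multiset (Fin N)).map MvPolynomial.X).prod := by
    rw [Finset.sum_sigma]
    refine Finset.sum_congr rfl fun r _ => ?_
    rw [Finset.sum_sigma, hPoly, Finset.sum_mul_sum]
  rw [lhs_eq, rhs_eq]
  refine Finset.sum_bij'
    (i := fun a ha => ⟨a.2.2, a.2.1,
      ⟨(a.1 : Multiset (Fin N)) - Multiset.replicate (a.2.2 + 1) a.2.1, by
        simp only [Finset.mem_sigma, Finset.mem_range] at ha
        have hle : Multiset.replicate (a.2.2 + 1) a.2.1 ≤ (a.1 : Multiset (Fin N)) :=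
          Multiset.le_count_iff_replicate_le.mp ha.2.2
        rw [Multiset.card_sub hle, Multiset.card_replicate]
        have h2 : Multiset.card (a.1 : Multiset (Fin N)) = n + 1 := a.1.2
        omega⟩⟩)
    (j := fun b hb => ⟨⟨(b.2.2 : Multiset (Fin N)) + Multiset.replicate (b.1 + 1) b.2.1, by
        simp only [Finset.mem_sigma, Finset.mem_range] at hb
        rw [Multiset.card_add, Multiset.card_replicate]
        have h2 : Multiset.card (b.2.2 : Multiset (Fin N)) = n - b.1 := b.2.2.2
        omega⟩, b.2.1, b.1⟩)
    ?_ ?_ ?_ ?_ ?_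
  · intro a ha
    simp only [Finset.mem_sigma, Finset.mem_range] at ha
    simp only [Finset.mem_sigma, Finset.mem_range, Finset.mem_univ, Finset.mem_sym_iff,
      true_and, and_true]
    have h2 : Multiset.card (a.1 : Multiset (Fin N)) = n + 1 := a.1.2
    have h3 := Multiset.count_le_card a.2.1 (a.1 : Multiset (Fin N))
    have h4 := ha.2.2
    constructor
    · omega
    · exact Finset.mem_sym_iff.mpr fun x _ => Finset.mem_univ x
  · intro b hb
    simp only [Finset.mem_sigma, Finset.mem_range] at hb
    simp only [Finset.mem_sigma, Finset.mem_range, Finset.mem_univ, Finset.mem_sym_iff,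
      true_and, and_true]
    refine ⟨Finset.mem_sym_iff.mpr fun x _ => Finset.mem_univ x, ?_⟩
    have h5 : b.1 + 1 ≤ Multiset.count b.2.1
        ((b.2.2 : Multiset (Fin N)) + Multiset.replicate (b.1 + 1) b.2.1) := by
      rw [Multiset.count_add, Multiset.count_replicate_self]; omega
    exact lt_of_lt_of_le (Nat.lt_succ_self _) h5
  · intro a ha
    simp only [Finset.mem_sigma, Finset.mem_range] at ha
    have hle : Multiset.replicate (a.2.2 + 1) a.2.1 ≤ (a.1 : Multiset (Fin N)) :=
      Multiset.le_count_iff_replicate_le.mp ha.2.2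
    obtain ⟨m, i, k⟩ := a
    exact Sigma.ext (Subtype.ext (tsub_add_cancel_of_le hle)) (by simp)
  · intro b hb
    obtain ⟨r, i, m'⟩ := b
    refine Sigma.ext rfl (heq_of_eq ?_)
    refine Sigma.ext rfl (heq_of_eq ?_)
    exact Subtype.ext (add_tsub_cancel_right _ _)
  · intro a ha
    simp only [Finset.mem_sigma, Finset.mem_range] at ha
    have hle : Multiset.replicate (a.2.2 + 1) a.2.1 ≤ (a.1 : Multiset (Fin N)) :=
      Multiset.le_count_iff_replicate_le.mp ha.2.2
    dsimp only
    conv_lhs => rw [← tsub_add_cancel_of_le hle]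
    rw [Multiset.map_add, Multiset.prod_add, Multiset.map_replicate, Multiset.prod_replicate,
      mul_comm]
    rfl

/-- The Newton-type recursion for the `N=2` barred homogeneous functions, the `τ̄`-sector
coefficient identity of `H·P = (t∂ₜ + τ̲∂_{τ̲} + τ̄∂_{τ̄})H`:
`(n+1)·h̄ₙ = Σ_{r=0}^{n} (pᵣ·h̄_{n-r} + (r+1)·p̄ᵣ·h_{n-r})`. -/
theorem hBar_newton_recursion
    [Ring R] [Algebra (MvPolynomial (Fin N) ℤ) R]
    (φ : Fin N → R)
    (hφφ : ∀ i j, φ i * φ j = -(φ j * φ i)) (n : ℕ) :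
    (n + 1) • hBar φ n =
      ∑ r ∈ Finset.range (n + 1),
        (algebraMap (MvPolynomial (Fin N) ℤ) R (pPoly N r) * hBar φ (n - r)
          + (r + 1) • (pBar' φ r * algebraMap (MvPolynomial (Fin N) ℤ) R (hPoly N (n - r)))) := by
  classical
  set A := algebraMap (MvPolynomial (Fin N) ℤ) R with hA
  have key := congrArg (fun p : MvPolynomial (Fin N) ℤ =>
      ∑ i, φ i * A (MvPolynomial.pderiv i p)) (newton_h N n)
  -- LHS of key
  have hL : (∑ i, φ i * A (MvPolynomial.pderiv i ((n + 1) • hPoly N (n + 1))))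
      = (n + 1) • hBar φ n := by
    rw [hBar, Finset.smul_sum]
    refine Finset.sum_congr rfl fun i _ => ?_
    rw [map_nsmul, map_nsmul, mul_smul_comm]
  -- derivative of power sums
  have hdp : ∀ (r : ℕ) (i : Fin N),
      MvPolynomial.pderiv i (pPoly N (r + 1)) = (r + 1) • (X i ^ r : MvPolynomial (Fin N) ℤ) := by
    intro r i
    show MvPolynomial.pderiv i (∑ j, (X j : MvPolynomial (Fin N) ℤ) ^ (r + 1)) = _
    rw [map_sum]
    rw [Finset.sum_eq_single i]
    · simp [MvPolynomial.pderiv_pow, mul_comm]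
    · intro j _ hj
      simp [MvPolynomial.pderiv_X, Pi.single_apply, hj]
    · simp
  have hDh0 : (∑ i, φ i * A (MvPolynomial.pderiv i (hPoly N 0))) = 0 := by
    have : hPoly N 0 = 1 := by
      rw [hPoly, Finset.sym_zero, Finset.sum_singleton]
      rfl
    simp [this]
  have step : ∀ (q r : ℕ),
      (∑ i, φ i * A (MvPolynomial.pderiv i (pPoly N (r + 1) * hPoly N q)))
        = (r + 1) • (pBar' φ r * A (hPoly N q))
          + A (pPoly N (r + 1)) * (∑ i, φ i * A (MvPolynomial.pderiv i (hPoly N q))) := by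
    intro q r
    have : ∀ i : Fin N, φ i * A (MvPolynomial.pderiv i (pPoly N (r + 1) * hPoly N q))
        = (r + 1) • (φ i * A (X i ^ r) * A (hPoly N q))
          + A (pPoly N (r + 1)) * (φ i * A (MvPolynomial.pderiv i (hPoly N q))) := by
      intro i
      rw [MvPolynomial.pderiv_mul, map_add, mul_add, hdp r i]
      have e1 : φ i * A ((r + 1) • (X i ^ r : MvPolynomial (Fin N) ℤ) * hPoly N q)
          = (r + 1) • (φ i * A (X i ^ r) * A (hPoly N q)) := by
        rw [smul_mul_assoc, map_nsmul, mul_smul_comm, map_mul, mul_assoc]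
      have e2 : φ i * A (pPoly N (r + 1) * MvPolynomial.pderiv i (hPoly N q))
          = A (pPoly N (r + 1)) * (φ i * A (MvPolynomial.pderiv i (hPoly N q))) := by
        rw [map_mul, ← mul_assoc,
          show φ i * A (pPoly N (r + 1)) = A (pPoly N (r + 1)) * φ i from
            (Algebra.commutes (pPoly N (r + 1)) (φ i)).symm, mul_assoc]
      rw [e1, e2]
    rw [Finset.sum_congr rfl fun i _ => this i, Finset.sum_add_distrib, ← Finset.smul_sum,
      ← Finset.mul_sum, ← Finset.sum_mul, pBar']
  rw [hL] at key
  have hpp : ∀ r : ℕ, pPoly N (r + 1) = ∑ j, (X j : MvPolynomial (Fin N) ℤ) ^ (r + 1) :=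
    fun r => rfl
  simp only [map_sum, Finset.mul_sum] at key
  rw [Finset.sum_comm] at key
  simp only [← hpp] at key
  rw [Finset.sum_congr rfl (fun r (hr : r ∈ Finset.range (n+1)) => step (n - r) r)] at key
  have hfin : ∑ r ∈ Finset.range (n + 1),
        A (pPoly N (r + 1)) * (∑ i, φ i * A (MvPolynomial.pderiv i (hPoly N (n - r))))
      = ∑ r ∈ Finset.range (n + 1), A (pPoly N r) * hBar φ (n - r) := by
    rw [Finset.sum_range_succ, Finset.sum_range_succ']
    have h1 : A (pPoly N 0) * hBar φ (n - 0) = 0 := by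
      show A 0 * hBar φ (n - 0) = 0
      rw [map_zero, zero_mul]
    have h2 : A (pPoly N (n + 1)) * (∑ i, φ i * A (MvPolynomial.pderiv i (hPoly N (n - n)))) = 0 := by
      rw [Nat.sub_self, hDh0, mul_zero]
    rw [h1, h2, add_zero, add_zero]
    refine Finset.sum_congr rfl fun r hr => ?_
    have hrn : r < n := Finset.mem_range.mp hr
    have hnr : n - r = (n - (r + 1)) + 1 := by omega
    rw [hnr]
    rfl
  rw [key, Finset.sum_add_distrib, Finset.sum_add_distrib, hfin, add_comm]
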